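/- Let p ≥ 1, let k₀ ∈ {1,…,p}, and let w ∈ Σ_{g,1,p} be an element whose reduced word does not end in t_{k₀} or t_{k₀}^{-1}. Then, in (∂Σ_{g,1,p}, ≤), every end in the shadow (w t_{k₀} t_{k₀} ◀) is strictly smaller than every end in the shadow (w t_{k₀}^{-1} t_{k₀}^{-1} ◀); that is, the maximum of (w t_{k₀} t_{k₀} ◀) is strictly smaller than the minimum of (w t_{k₀}^{-1} t_{k₀}^{-1} ◀). -/

import Mathlib

namespace Paper

/-- Generators of the free group `Σ_{g,1,p}`: `x_1,…,x_g`, `y_1,…,y_g`, `t_1,…,t_p`. -/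
inductive Gen (g p : ℕ) : Type
  | x : Fin g → Gen g p
  | y : Fin g → Gen g p
  | t : Fin p → Gen g p
  deriving DecidableEq

/-- `Σ_{g,1,p}`, the free group of rank `2g+p`. -/
abbrev Sig (g p : ℕ) := FreeGroup (Gen g p)

def X (g p : ℕ) (i : Fin g) : Sig g p := FreeGroup.of (Gen.x i)
def Y (g p : ℕ) (i : Fin g) : Sig g p := FreeGroup.of (Gen.y i)
def T (g p : ℕ) (k : Fin p) : Sig g p := FreeGroup.of (Gen.t k)

open scoped commutatorElement in
/-- `[x_1,y_1]⋯[x_g,y_g]`. -/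
def comms (g p : ℕ) : Sig g p := (List.ofFn fun i : Fin g => ⁅X g p i, Y g p i⁆).prod

/-- `t_1⋯t_p`. -/
def tprod (g p : ℕ) : Sig g p := (List.ofFn fun k : Fin p => T g p k).prod

/-- The boundary word `z̄₁ = [x_1,y_1]⋯[x_g,y_g]·t_1⋯t_p`. -/
def zbar (g p : ℕ) : Sig g p := comms g p * tprod g p

/-- `z₁ = z̄₁⁻¹`. -/
def zone (g p : ℕ) : Sig g p := (zbar g p)⁻¹

/-- Membership in the algebraic mapping-class group `AM_{g,1,p}`:
automorphisms fixing the boundary word `z̄₁` and permuting the set of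
conjugacy classes `{[t_1⁻¹],…,[t_p⁻¹]}`. -/
def IsAM {g p : ℕ} (φ : Sig g p ≃* Sig g p) : Prop :=
  φ (zbar g p) = zbar g p ∧
  ∃ π : Equiv.Perm (Fin p), ∀ k : Fin p, IsConj ((T g p (π k))⁻¹) (φ ((T g p k)⁻¹))

/-- The inverse of a letter. -/
def linv {β : Type} (a : β × Bool) : β × Bool := (a.1, !a.2)

/-- An infinite sequence of letters; the ends of the free group on `β` are the
reduced ones. -/
abbrev EndSeq (β : Type) := ℕ → β × Bool

/-- A sequence of letters is an end when it is reduced: no letter is followed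
by its inverse. -/
def IsEnd {β : Type} (e : EndSeq β) : Prop := ∀ i, e (i + 1) ≠ linv (e i)

/-- Prepend a letter to an infinite sequence, performing one cancellation. -/
def prependL {β : Type} [DecidableEq β] (a : β × Bool) (e : EndSeq β) : EndSeq β :=
  if e 0 = linv a then fun i => e (i + 1)
  else fun i => match i with
    | 0 => a
    | j + 1 => e j

/-- The action of a group element `u` on ends: left multiplication by `u`
followed by reduction, written `u(e)` in the paper. -/
def act {β : Type} [DecidableEq β] (u : FreeGroup β) (e : EndSeq β) : EndSeq β :=
  u.toWord.foldr prependL e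

/-- The periodic sequence repeating the list `l` (with a default letter `d`,
irrelevant when `l ≠ []`): for cyclically reduced `w ≠ 1`, applied to the
reduced word of `w` this is the end `w^∞ = www⋯`. -/
def perEnd {β : Type} (l : List (β × Bool)) (d : β × Bool) : EndSeq β :=
  fun i => l.getD (i % l.length) d

/-- The rank of the letter `a` in the ordering determined by the associated
sequence `s` and by the preceding letter (`none` at the start of a word;
`some c` after a prefix ending with the letter `c`): after a prefix ending with
`c`, the letters are ordered cyclically starting just after `c⁻¹`. -/
def rank {β : Type} [DecidableEq β] (s : List (β × Bool)) (c? : Option (β × Bool))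
    (a : β × Bool) : ℕ :=
  match c? with
  | none => s.idxOf a
  | some c => (s.idxOf a + s.length - s.idxOf (linv c)) % s.length

/-- The strict ordering `<_s` on ends determined by a sequence `s` listing the
letters: two distinct ends are compared at the first place where they differ,
via `rank` relative to the common prefix. -/
def endLT {β : Type} [DecidableEq β] (s : List (β × Bool)) (e f : EndSeq β) : Prop :=
  ∃ i : ℕ, (∀ j, j < i → e j = f j) ∧ e i ≠ f i ∧
    rank s (if i = 0 then none else some (e (i - 1))) (e i) <
      rank s (if i = 0 then none else some (f (i - 1))) (f i)

/-- The ordering `≤_s` on ends. -/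
def endLE {β : Type} [DecidableEq β] (s : List (β × Bool)) (e f : EndSeq β) : Prop :=
  e = f ∨ endLT s e f

/-- The shadow `(u◀)`: ends whose initial segment is the reduced word of `u`. -/
def shadow {β : Type} [DecidableEq β] (u : FreeGroup β) : Set (EndSeq β) :=
  {e | IsEnd e ∧ ∀ (j : ℕ) (h : j < u.toWord.length), e j = u.toWord.get ⟨j, h⟩}

/-- `e` is the minimum of `S` for the ordering determined by `s`. -/
def IsMinIn {β : Type} [DecidableEq β] (s : List (β × Bool)) (S : Set (EndSeq β))
    (e : EndSeq β) : Prop :=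
  e ∈ S ∧ ∀ f ∈ S, endLE s e f

/-- `e` is the maximum of `S` for the ordering determined by `s`. -/
def IsMaxIn {β : Type} [DecidableEq β] (s : List (β × Bool)) (S : Set (EndSeq β))
    (e : EndSeq β) : Prop :=
  e ∈ S ∧ ∀ f ∈ S, endLE s f e

/-- The interval `[e ↑ f]` of ends between `e` and `f`. -/
def intervalE {β : Type} [DecidableEq β] (s : List (β × Bool)) (e f : EndSeq β) :
    Set (EndSeq β) :=
  {h | IsEnd h ∧ endLE s e h ∧ endLE s h f}

/-- The standard associated sequence
`(x̄_1, y_1, x_1, ȳ_1, …, x̄_g, y_g, x_g, ȳ_g, t_1, t̄_1, …, t_p, t̄_p)`,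
defining the standard ordering `<` on `∂Σ_{g,1,p}`. -/
def stdSeq (g p : ℕ) : List (Gen g p × Bool) :=
  ((List.finRange g).flatMap fun i =>
    [(Gen.x i, false), (Gen.y i, true), (Gen.x i, true), (Gen.y i, false)]) ++
  ((List.finRange p).flatMap fun k => [(Gen.t k, true), (Gen.t k, false)])

/-- The end `z̄₁^∞`. -/
def zbarInf (g p : ℕ) (hp : 0 < p) : EndSeq (Gen g p) :=
  perEnd (zbar g p).toWord (Gen.t ⟨0, hp⟩, true)

/-- The end `z₁^∞`. -/
def zoneInf (g p : ℕ) (hp : 0 < p) : EndSeq (Gen g p) :=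
  perEnd (zone g p).toWord (Gen.t ⟨0, hp⟩, true)

/-- The cyclic rotation `t_{k+1}⋯t_p·[x_1,y_1]⋯[x_g,y_g]·t_1⋯t_k` of `z̄₁`
(here `k` is 0-based: `k` letters `t` are moved to the back, so for
`k₀ : Fin p` the word `rotT g p k₀.val` is `t_{k₀}⋯t_p·[x_1,y_1]⋯[x_g,y_g]·t_1⋯t_{k₀-1}`
in the 1-based notation of the paper). -/
def rotT (g p : ℕ) (k : ℕ) : Sig g p :=
  (((List.finRange p).drop k).map (T g p)).prod * comms g p *
    (((List.finRange p).take k).map (T g p)).prod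

/-- The end `(t_{k+1}⋯t_p·[x_1,y_1]⋯[x_g,y_g]·t_1⋯t_k)^∞` (0-based `k`). -/
def rotInf (g p : ℕ) (hp : 0 < p) (k : ℕ) : EndSeq (Gen g p) :=
  perEnd (rotT g p k).toWord (Gen.t ⟨0, hp⟩, true)

/-- The end `(t̄_k⋯t̄_1·[y_g,x_g]⋯[y_1,x_1]·t̄_p⋯t̄_{k+1})^∞` (0-based `k`). -/
def rotInvInf (g p : ℕ) (hp : 0 < p) (k : ℕ) : EndSeq (Gen g p) :=
  perEnd ((rotT g p k)⁻¹).toWord (Gen.t ⟨0, hp⟩, true)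


section Aux

section IndexOf
variable {α : Type} [BEq α] [LawfulBEq α]

lemma my_indexOf_cons_self (a : α) (l : List α) : (a :: l).idxOf a = 0 := by
  rw [List.idxOf_cons]
  simp

lemma my_indexOf_cons_ne {a b : α} (l : List α) (h : b ≠ a) :
    (b :: l).idxOf a = l.idxOf a + 1 := by
  rw [List.idxOf_cons, beq_eq_false_iff_ne.2 h]
  rfl

lemma my_indexOf_append {a : α} {l₁ : List α} (l₂ : List α) (h : a ∉ l₁) :
    (l₁ ++ l₂).idxOf a = l₁.length + l₂.idxOf a := by
  induction l₁ with
  | nil => simp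
  | cons b l ih =>
    rw [List.cons_append, my_indexOf_cons_ne _ (fun e => h (by simp [e])),
      ih (fun m => h (List.mem_cons_of_mem _ m)), List.length_cons]
    omega

lemma my_indexOf_lt_length {a : α} {l : List α} (h : a ∈ l) : l.idxOf a < l.length := by
  induction l with
  | nil => cases h
  | cons b l ih =>
    by_cases hba : b = a
    · subst hba
      rw [my_indexOf_cons_self]
      simp
    · rw [my_indexOf_cons_ne _ hba]
      have hm : a ∈ l := by
        rcases List.mem_cons.1 h with h' | h'
        · exact absurd h'.symm hba
        · exact h'
      simpa using ih hm

lemma my_getElem_indexOf {a : α} {l : List α} (h : a ∈ l) (hlt : l.idxOf a < l.length) :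
    l[l.idxOf a] = a := by
  induction l with
  | nil => cases h
  | cons b l ih =>
    by_cases hba : b = a
    · subst hba
      simp [my_indexOf_cons_self]
    · have hm : a ∈ l := by
        rcases List.mem_cons.1 h with h' | h'
        · exact absurd h'.symm hba
        · exact h'
      have hne := my_indexOf_cons_ne (a := a) l hba
      simp only [hne, List.getElem_cons_succ]
      exact ih hm (my_indexOf_lt_length hm)

end IndexOf


variable {β : Type} [DecidableEq β]

lemma reduce_cons_of_head (a : β × Bool) (L : List (β × Bool)) (hL : FreeGroup.reduce L = L)
    (h : ∀ hd, L.head? = some hd → ¬(a.1 = hd.1 ∧ a.2 = !hd.2)) :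
    FreeGroup.reduce (a :: L) = a :: L := by
  rw [FreeGroup.reduce.cons, hL]
  cases L with
  | nil => rfl
  | cons hd tl =>
    simp only
    rw [if_neg (h hd rfl)]

omit [DecidableEq β] in
lemma head?_invRev (L : List (β × Bool)) :
    (FreeGroup.invRev L).head? = L.getLast?.map linv := by
  simp only [FreeGroup.invRev, List.head?_reverse, List.getLast?_map]
  rfl

lemma toWord_mul_singleton (w : FreeGroup β) (a : β × Bool)
    (h : w.toWord.getLast? ≠ some (linv a)) :
    (w * FreeGroup.mk [a]).toWord = w.toWord ++ [a] := by
  conv_lhs => rw [← FreeGroup.mk_toWord (x := w)]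
  rw [FreeGroup.mul_mk, FreeGroup.toWord_mk]
  have h1 : FreeGroup.invRev (w.toWord ++ [a]) = linv a :: FreeGroup.invRev w.toWord := by
    simp [FreeGroup.invRev, linv]
  have h2 : FreeGroup.reduce (FreeGroup.invRev w.toWord) = FreeGroup.invRev w.toWord := by
    rw [FreeGroup.reduce_invRev, FreeGroup.reduce_toWord]
  have h3 : FreeGroup.reduce (FreeGroup.invRev (w.toWord ++ [a]))
      = FreeGroup.invRev (w.toWord ++ [a]) := by
    rw [h1]
    refine reduce_cons_of_head _ _ h2 ?_
    intro hd hhd hcontra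
    rw [head?_invRev] at hhd
    obtain ⟨c, hc, hc2⟩ := Option.map_eq_some_iff.1 hhd
    apply h
    rw [hc]
    have : c = linv a := by
      subst hc2
      obtain ⟨c1, c2⟩ := c
      obtain ⟨a1, a2⟩ := a
      simp [linv] at hcontra ⊢
      aesop
    rw [this]
  have := congrArg FreeGroup.invRev h3
  rwa [← FreeGroup.reduce_invRev, FreeGroup.invRev_invRev] at this

lemma rank_mod_lt (m d len : ℕ) (hm : m + 1 < len) (hd : d < len) (h1 : d ≠ m) (h2 : d ≠ m + 1) :
    (m + len - d) % len < (m + 1 + len - d) % len := by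
  rcases Nat.lt_or_ge d (m + 1) with hlt | hge
  · have hdm : d < m := by omega
    have e1 : m + len - d = (m - d) + len := by omega
    have e2 : m + 1 + len - d = (m + 1 - d) + len := by omega
    rw [e1, e2, Nat.add_mod_right, Nat.add_mod_right,
      Nat.mod_eq_of_lt (by omega), Nat.mod_eq_of_lt (by omega)]
    omega
  · have : m + 2 ≤ d := by omega
    rw [Nat.mod_eq_of_lt (by omega), Nat.mod_eq_of_lt (by omega)]
    omega

end Aux

section Std

lemma t_not_mem_xy (g p : ℕ) (k : Fin p) (b : Bool) :
    (Gen.t k, b) ∉ (List.finRange g).flatMap fun i =>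
      [(Gen.x i, false), (Gen.y i, true), (Gen.x i, true), (Gen.y i, false)] := by
  simp

lemma length_xy (g p : ℕ) :
    ((List.finRange g).flatMap fun i =>
      ([(Gen.x i, false), (Gen.y i, true), (Gen.x i, true), (Gen.y i, false)] :
        List (Gen g p × Bool))).length = 4 * g := by
  rw [List.length_flatMap]
  simp [Function.comp_def, List.map_const', List.sum_replicate, mul_comm]

lemma indexOf_tpart (g p : ℕ) (l : List (Fin p)) (k : Fin p) (hk : k ∈ l) (b : Bool) :
    (l.flatMap fun k' => ([(Gen.t k', true), (Gen.t k', false)] :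
        List (Gen g p × Bool))).idxOf (Gen.t k, b)
      = 2 * l.idxOf k + (bif b then 0 else 1) := by
  induction l with
  | nil => cases hk
  | cons h tl ih =>
    rw [List.flatMap_cons]
    by_cases hk' : k = h
    · subst hk'
      cases b
      · rw [show ([(Gen.t k, true), (Gen.t k, false)] : List (Gen g p × Bool)) ++ _
            = (Gen.t k, true) :: ((Gen.t k, false) :: _) from rfl,
          my_indexOf_cons_ne _ (by simp), my_indexOf_cons_self, my_indexOf_cons_self]
        rfl
      · rw [show ([(Gen.t k, true), (Gen.t k, false)] : List (Gen g p × Bool)) ++ _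
            = (Gen.t k, true) :: ((Gen.t k, false) :: _) from rfl,
          my_indexOf_cons_self, my_indexOf_cons_self]
        rfl
    · have hmem : k ∈ tl := by
        rcases List.mem_cons.1 hk with h' | h'
        · exact absurd h' hk'
        · exact h'
      have hnm : (Gen.t k, b) ∉ ([(Gen.t h, true), (Gen.t h, false)] :
          List (Gen g p × Bool)) := by
        simp [hk']
      rw [my_indexOf_append _ hnm, ih hmem, my_indexOf_cons_ne _ (fun h' => hk' h'.symm)]
      cases b <;> simp <;> ring

lemma length_stdSeq (g p : ℕ) : (stdSeq g p).length = 4 * g + 2 * p := by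
  rw [stdSeq, List.length_append, length_xy, List.length_flatMap]
  simp [Function.comp_def, List.map_const', List.sum_replicate, mul_comm]

lemma indexOf_stdSeq_t (g p : ℕ) (k : Fin p) (b : Bool) :
    (stdSeq g p).idxOf (Gen.t k, b) = 4 * g + (2 * k + (bif b then 0 else 1)) := by
  rw [stdSeq, my_indexOf_append _ (t_not_mem_xy g p k b), length_xy,
    indexOf_tpart g p _ k (List.mem_finRange k) b, List.idxOf_finRange]

lemma mem_stdSeq (g p : ℕ) (a : Gen g p × Bool) : a ∈ stdSeq g p := by
  obtain ⟨c, b⟩ := a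
  rw [stdSeq, List.mem_append]
  cases c with
  | x i => exact Or.inl (List.mem_flatMap.2 ⟨i, List.mem_finRange i, by cases b <;> simp⟩)
  | y i => exact Or.inl (List.mem_flatMap.2 ⟨i, List.mem_finRange i, by cases b <;> simp⟩)
  | t k => exact Or.inr (List.mem_flatMap.2 ⟨k, List.mem_finRange k, by cases b <;> simp⟩)

end Std

def NotEndT {g p : ℕ} (w : Sig g p) (k : Fin p) : Prop :=
  ∀ b : Bool, w.toWord.getLast? ≠ some (Gen.t k, b)

/-- **Lemma 7.3(ii) (paper)**: for `k₀ ∈ {1,…,p}` and `w ∈ Σ_{g,1,p}` whose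
reduced word does not end in `t_{k₀}^{±1}`, every end in the shadow
`(w t_{k₀} t_{k₀} ◀)` is strictly smaller, in `(∂Σ_{g,1,p}, ≤)`, than every end
in the shadow `(w t̄_{k₀} t̄_{k₀} ◀)`; that is,
`max(w t_{k₀} t_{k₀} ◀) < min(w t̄_{k₀} t̄_{k₀} ◀)`. -/
theorem lemma_rep_ii (g p : ℕ) (hp : 0 < p) (k₀ : Fin p) (w : Sig g p)
    (hw : NotEndT w k₀) :
    ∀ e ∈ shadow (w * T g p k₀ * T g p k₀),
      ∀ f ∈ shadow (w * (T g p k₀)⁻¹ * (T g p k₀)⁻¹),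
        endLT (stdSeq g p) e f := by
  intro e he f hf
  classical
  set W := w.toWord with hWdef
  have hTmk : T g p k₀ = FreeGroup.mk [(Gen.t k₀, true)] := rfl
  have hTimk : (T g p k₀)⁻¹ = FreeGroup.mk [(Gen.t k₀, false)] := by
    rw [hTmk, FreeGroup.inv_mk]; rfl
  have h1 : (w * T g p k₀).toWord = W ++ [(Gen.t k₀, true)] := by
    rw [hTmk]; exact toWord_mul_singleton w _ (hw false)
  have h2 : (w * T g p k₀ * T g p k₀).toWord
      = W ++ [(Gen.t k₀, true), (Gen.t k₀, true)] := by
    have e1 : w * T g p k₀ * T g p k₀ = (w * T g p k₀) * FreeGroup.mk [(Gen.t k₀, true)] := by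
      rw [← hTmk]
    rw [e1, toWord_mul_singleton _ _ (by rw [h1, List.getLast?_concat]; simp [linv]), h1,
      List.append_assoc]
    rfl
  have h1' : (w * (T g p k₀)⁻¹).toWord = W ++ [(Gen.t k₀, false)] := by
    rw [hTimk]; exact toWord_mul_singleton w _ (hw true)
  have h2' : (w * (T g p k₀)⁻¹ * (T g p k₀)⁻¹).toWord
      = W ++ [(Gen.t k₀, false), (Gen.t k₀, false)] := by
    have e1 : w * (T g p k₀)⁻¹ * (T g p k₀)⁻¹
        = (w * (T g p k₀)⁻¹) * FreeGroup.mk [(Gen.t k₀, false)] := by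
      rw [← hTimk]
    rw [e1, toWord_mul_singleton _ _ (by rw [h1', List.getLast?_concat]; simp [linv]), h1',
      List.append_assoc]
    rfl
  set n := W.length with hn
  obtain ⟨hee, he2⟩ := he
  obtain ⟨hfe, hf2⟩ := hf
  have hlen2 : (w * T g p k₀ * T g p k₀).toWord.length = n + 2 := by rw [h2]; simp [hn]
  have hlen2' : (w * (T g p k₀)⁻¹ * (T g p k₀)⁻¹).toWord.length = n + 2 := by rw [h2']; simp [hn]
  have heW : ∀ j, (hj : j < n) → e j = W[j] := by
    intro j hj
    have h' : j < (w * T g p k₀ * T g p k₀).toWord.length := by omega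
    have := he2 j h'
    rw [List.get_eq_getElem] at this
    rw [this]
    simp only [h2]
    exact List.getElem_append_left hj
  have hfW : ∀ j, (hj : j < n) → f j = W[j] := by
    intro j hj
    have h' : j < (w * (T g p k₀)⁻¹ * (T g p k₀)⁻¹).toWord.length := by omega
    have := hf2 j h'
    rw [List.get_eq_getElem] at this
    rw [this]
    simp only [h2']
    exact List.getElem_append_left hj
  have heN : e n = (Gen.t k₀, true) := by
    have h' : n < (w * T g p k₀ * T g p k₀).toWord.length := by omega
    have := he2 n h'
    rw [List.get_eq_getElem] at this
    rw [this]
    simp only [h2]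
    rw [List.getElem_append_right (le_refl n)]
    simp [hn]
  have hfN : f n = (Gen.t k₀, false) := by
    have h' : n < (w * (T g p k₀)⁻¹ * (T g p k₀)⁻¹).toWord.length := by omega
    have := hf2 n h'
    rw [List.get_eq_getElem] at this
    rw [this]
    simp only [h2']
    rw [List.getElem_append_right (le_refl n)]
    simp [hn]
  refine ⟨n, fun j hj => by rw [heW j hj, hfW j hj], by rw [heN, hfN]; simp, ?_⟩
  by_cases hn0 : n = 0
  · simp only [if_pos hn0, heN, hfN, rank]
    rw [indexOf_stdSeq_t, indexOf_stdSeq_t]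
    simp
  · have hn1 : n - 1 < n := by omega
    have hc : e (n - 1) = W[n - 1] := heW _ hn1
    have hcf : f (n - 1) = W[n - 1] := hfW _ hn1
    set c : Gen g p × Bool := W[n - 1] with hcdef
    have hlastW : W.getLast? = some c := by
      rw [List.getLast?_eq_getElem?, List.getElem?_eq_getElem hn1]
    have hcnot : ∀ b : Bool, c ≠ (Gen.t k₀, b) := by
      intro b hb
      exact hw b (by rw [hlastW, hb])
    have hlinvc : ∀ b : Bool, linv c ≠ (Gen.t k₀, b) := by
      intro b hb
      apply hcnot (!b)
      have : linv (linv c) = linv (Gen.t k₀, b) := by rw [hb]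
      simpa [linv] using this
    simp only [if_neg hn0, heN, hfN, hc, hcf, rank]
    set s := stdSeq g p with hsdef
    set d := s.idxOf (linv c) with hddef
    have hdlt : d < s.length := my_indexOf_lt_length (mem_stdSeq g p _)
    have hsd : s[d] = linv c := my_getElem_indexOf (mem_stdSeq g p _) hdlt
    have hit : s.idxOf (Gen.t k₀, true) = 4 * g + 2 * k₀ := by
      rw [hsdef, indexOf_stdSeq_t]; simp
    have hif : s.idxOf (Gen.t k₀, false) = 4 * g + 2 * k₀ + 1 := by
      rw [hsdef, indexOf_stdSeq_t]; simp; omega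
    have hslen : s.length = 4 * g + 2 * p := length_stdSeq g p
    have hmlt : 4 * g + 2 * k₀ + 1 < s.length := by
      have := k₀.isLt; omega
    have hdm : d ≠ 4 * g + 2 * k₀ := by
      intro hdmx
      apply hlinvc true
      have h1t : s[s.idxOf ((Gen.t k₀, true) : Gen g p × Bool)]? = some (Gen.t k₀, true) := by
        rw [List.getElem?_eq_getElem (my_indexOf_lt_length (mem_stdSeq g p _)),
          my_getElem_indexOf (mem_stdSeq g p _)]
      have h2t : s[d]? = some (linv c) := by
        rw [List.getElem?_eq_getElem hdlt, hsd]
      rw [hit, ← hdmx, h2t] at h1t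
      exact Option.some.inj h1t
    have hdm1 : d ≠ 4 * g + 2 * k₀ + 1 := by
      intro hdmx
      apply hlinvc false
      have h1t : s[s.idxOf ((Gen.t k₀, false) : Gen g p × Bool)]? = some (Gen.t k₀, false) := by
        rw [List.getElem?_eq_getElem (my_indexOf_lt_length (mem_stdSeq g p _)),
          my_getElem_indexOf (mem_stdSeq g p _)]
      have h2t : s[d]? = some (linv c) := by
        rw [List.getElem?_eq_getElem hdlt, hsd]
      rw [hif, ← hdmx, h2t] at h1t
      exact Option.some.inj h1t
    rw [hit, hif]
    have := rank_mod_lt (4 * g + 2 * k₀) d s.length hmlt hdlt hdm hdm1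
    convert this using 2


end Paper
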